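/- Gupta et al.'s inequality: for a nonnegative submodular function f and sets T₁, T₂, OPT with T₂ ⊆ V ∖ T₁, we have f(T₁ ∪ OPT) + f(T₂ ∪ (OPT ∖ T₁)) + f(T₁ ∩ OPT) ≥ f(OPT). -/
import Mathlib


open MeasureTheory Finset

/-- A set function is submodular. -/
def Submodular {V : Type*} [DecidableEq V] (f : Finset V → ℝ) : Prop :=
  ∀ A B : Finset V, f (A ∪ B) + f (A ∩ B) ≤ f A + f B

/-- The Lovász extension: expectation over a uniform threshold θ ∈ (0,1). -/
noncomputable def lovasz {V : Type*} [Fintype V] [DecidableEq V]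
    (f : Finset V → ℝ) (x : V → ℝ) : ℝ :=
  ∫ θ in Set.Ioo (0:ℝ) 1, f (Finset.univ.filter (fun i => θ ≤ x i))

/-- Characteristic vector of a finite set. -/
def charVec {V : Type*} [DecidableEq V] (S : Finset V) : V → ℝ :=
  fun i => if i ∈ S then 1 else 0

/-- Gupta et al.'s inequality for nonnegative submodular functions. -/
theorem gupta_inequality {V : Type*} [DecidableEq V]
    (f : Finset V → ℝ) (hsub : Submodular f) (hnn : ∀ A : Finset V, 0 ≤ f A)
    (T1 T2 OPT : Finset V) (hdisj : Disjoint T1 T2) :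
    f OPT ≤ f (T1 ∪ OPT) + f (T2 ∪ (OPT \ T1)) + f (T1 ∩ OPT) := by
  have h1 := hsub (T1 ∪ OPT) (T2 ∪ (OPT \ T1))
  have h2 := hsub (OPT \ T1) (T1 ∩ OPT)
  have e1 : (T1 ∪ OPT) ∩ (T2 ∪ (OPT \ T1)) = OPT \ T1 := by
    ext x
    simp only [Finset.mem_inter, Finset.mem_union, Finset.mem_sdiff]
    constructor
    · rintro ⟨h1 | h1, h2 | h2⟩
      · exact absurd h2 (Finset.disjoint_left.mp hdisj h1)
      · exact h2
      · exact ⟨h1, fun ht => Finset.disjoint_left.mp hdisj ht h2⟩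
      · exact h2
    · rintro ⟨ho, ht⟩
      exact ⟨Or.inr ho, Or.inr ⟨ho, ht⟩⟩
  have e2 : (OPT \ T1) ∪ (T1 ∩ OPT) = OPT := by
    ext x
    simp only [Finset.mem_union, Finset.mem_sdiff, Finset.mem_inter]
    tauto
  have e3 : (OPT \ T1) ∩ (T1 ∩ OPT) = ∅ := by
    ext x
    simp only [Finset.mem_inter, Finset.mem_sdiff, Finset.notMem_empty]
    tauto
  rw [e1] at h1
  rw [e2, e3] at h2
  have := hnn ((T1 ∪ OPT) ∪ (T2 ∪ (OPT \ T1)))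
  have := hnn (∅ : Finset V)
  linarith
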